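/- Assume: (positivity) P(T=t, M=m, Z=z) > 0 for every t ∈ {0,1}, m ∈ 𝕄 and every z with P(Z=z) > 0; and (ii) mediator ignorability: for all t, t' ∈ {0,1}, m ∈ 𝕄, v ∈ V and u, s with P(Z_TM=u, Z_MY=s) > 0, P(M(t)=m, T=t', Z_TY=v | Z_TM=u, Z_MY=s) = P(M(t)=m | Z_TM=u, Z_MY=s) · P(T=t', Z_TY=v | Z_TM=u, Z_MY=s). Then for every t ∈ {0,1}, m ∈ 𝕄 and z = (u,v,s) with P(Z=z) > 0: P(M(t)=m | Z=z) = P(M=m | T=t, Z_TM=u, Z_MY=s). -/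

import Mathlib

open Finset
open scoped Classical

/-- Probability of an event `A` under the finite distribution `p`. -/
noncomputable def Pr {Ω : Type*} [Fintype Ω] (p : Ω → ℝ) (A : Ω → Prop) : ℝ :=
  ∑ ω, if A ω then p ω else 0

/-- Expectation of a random variable `V` under the finite distribution `p`. -/
noncomputable def Ex {Ω : Type*} [Fintype Ω] (p : Ω → ℝ) (V : Ω → ℝ) : ℝ :=
  ∑ ω, p ω * V ω

/-- Conditional probability `P(A | B) = P(A ∩ B) / P(B)`. -/
noncomputable def PrCond {Ω : Type*} [Fintype Ω] (p : Ω → ℝ) (A B : Ω → Prop) : ℝ :=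
  Pr p (fun ω => A ω ∧ B ω) / Pr p B

/-- Conditional expectation `E[V | B] = E[V·1_B] / P(B)`. -/
noncomputable def ExCond {Ω : Type*} [Fintype Ω] (p : Ω → ℝ) (V : Ω → ℝ) (B : Ω → Prop) : ℝ :=
  Ex p (fun ω => V ω * (if B ω then 1 else 0)) / Pr p B


lemma Pr_nonneg {Ω : Type*} [Fintype Ω] (p : Ω → ℝ) (hp : ∀ ω, 0 ≤ p ω) (A : Ω → Prop) :
    0 ≤ Pr p A :=
  Finset.sum_nonneg fun ω _ => by by_cases h : A ω <;> simp [h, hp ω]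

lemma Pr_mono {Ω : Type*} [Fintype Ω] (p : Ω → ℝ) (hp : ∀ ω, 0 ≤ p ω) {A B : Ω → Prop}
    (h : ∀ ω, A ω → B ω) : Pr p A ≤ Pr p B :=
  Finset.sum_le_sum fun ω _ => by
    by_cases hA : A ω
    · simp [hA, h ω hA]
    · by_cases hB : B ω <;> simp [hA, hB, hp ω]

lemma Pr_congr {Ω : Type*} [Fintype Ω] (p : Ω → ℝ) {A B : Ω → Prop}
    (h : ∀ ω, A ω ↔ B ω) : Pr p A = Pr p B := by
  unfold Pr
  exact Finset.sum_congr rfl fun ω _ => by rw [if_congr (h ω) rfl rfl]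

lemma Pr_partition {Ω α : Type*} [Fintype Ω] [Fintype α] (p : Ω → ℝ) (f : Ω → α)
    (C : Ω → Prop) : ∑ a, Pr p (fun ω => C ω ∧ f ω = a) = Pr p C := by
  unfold Pr
  rw [Finset.sum_comm]
  refine Finset.sum_congr rfl fun ω _ => ?_
  by_cases h : C ω <;> simp [h]

/-- `P(M(t)=m | Z=z) = P(M=m | T=t, Z_TM=u, Z_MY=s)` under positivity
and mediator ignorability. -/
theorem stmt9 {Ω 𝕄 U V S : Type*}
    [Fintype Ω] [Fintype 𝕄] [Fintype U] [Fintype V] [Fintype S]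
    (p : Ω → ℝ) (hp : ∀ ω, 0 ≤ p ω) (hp1 : ∑ ω, p ω = 1)
    (T : Ω → Fin 2) (M : Fin 2 → Ω → 𝕄) (Y : Fin 2 → 𝕄 → Ω → ℝ)
    (ZTM : Ω → U) (ZTY : Ω → V) (ZMY : Ω → S)
    -- positivity
    (hpos : ∀ (t : Fin 2) (m : 𝕄) (z : U × V × S),
      0 < Pr p (fun ω => (ZTM ω, ZTY ω, ZMY ω) = z) →
      0 < Pr p (fun ω => T ω = t ∧ M (T ω) ω = m ∧ (ZTM ω, ZTY ω, ZMY ω) = z))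
    -- (ii) mediator ignorability
    (hMed : ∀ (t t' : Fin 2) (m : 𝕄) (v : V) (u : U) (s : S),
      0 < Pr p (fun ω => ZTM ω = u ∧ ZMY ω = s) →
      PrCond p (fun ω => M t ω = m ∧ T ω = t' ∧ ZTY ω = v)
          (fun ω => ZTM ω = u ∧ ZMY ω = s) =
        PrCond p (fun ω => M t ω = m) (fun ω => ZTM ω = u ∧ ZMY ω = s) *
          PrCond p (fun ω => T ω = t' ∧ ZTY ω = v) (fun ω => ZTM ω = u ∧ ZMY ω = s)) :
    ∀ (t : Fin 2) (m : 𝕄) (z : U × V × S),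
      0 < Pr p (fun ω => (ZTM ω, ZTY ω, ZMY ω) = z) →
      PrCond p (fun ω => M t ω = m) (fun ω => (ZTM ω, ZTY ω, ZMY ω) = z) =
        PrCond p (fun ω => M (T ω) ω = m)
          (fun ω => T ω = t ∧ ZTM ω = z.1 ∧ ZMY ω = z.2.2) := by
  intro t m z hz
  obtain ⟨u, v, s⟩ := z
  have hB : 0 < Pr p (fun ω => ZTM ω = u ∧ ZMY ω = s) := by
    refine lt_of_lt_of_le hz (Pr_mono p hp ?_)
    rintro ω h
    simp only [Prod.mk.injEq] at h
    exact ⟨h.1, h.2.2⟩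
  have hTB : 0 < Pr p (fun ω => T ω = t ∧ ZTM ω = u ∧ ZMY ω = s) := by
    refine lt_of_lt_of_le (hpos t m (u, v, s) hz) (Pr_mono p hp ?_)
    rintro ω ⟨h1, _, h3⟩
    simp only [Prod.mk.injEq] at h3
    exact ⟨h1, h3.1, h3.2.2⟩
  set c := PrCond p (fun ω => M t ω = m) (fun ω => ZTM ω = u ∧ ZMY ω = s) with hc
  -- ignorability in unconditional form
  have key : ∀ (t' : Fin 2) (v' : V),
      Pr p (fun ω => (M t ω = m ∧ T ω = t' ∧ ZTY ω = v') ∧ ZTM ω = u ∧ ZMY ω = s) =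
        c * Pr p (fun ω => (T ω = t' ∧ ZTY ω = v') ∧ ZTM ω = u ∧ ZMY ω = s) := by
    intro t' v'
    have h := hMed t t' m v' u s hB
    rw [hc]
    simp only [PrCond] at h ⊢
    rw [div_mul_eq_mul_div, eq_div_iff hB.ne']
    field_simp at h
    apply mul_right_cancel₀ hB.ne'
    linear_combination (Pr p (fun ω => ZTM ω = u ∧ ZMY ω = s)) * h
  -- LHS numerator
  have hL : Pr p (fun ω => M t ω = m ∧ (ZTM ω, ZTY ω, ZMY ω) = (u, v, s)) =
      c * Pr p (fun ω => (ZTM ω, ZTY ω, ZMY ω) = (u, v, s)) := by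
    have e1 : Pr p (fun ω => M t ω = m ∧ (ZTM ω, ZTY ω, ZMY ω) = (u, v, s)) =
        ∑ t' : Fin 2, Pr p
          (fun ω => (M t ω = m ∧ T ω = t' ∧ ZTY ω = v) ∧ ZTM ω = u ∧ ZMY ω = s) := by
      rw [← Pr_partition p T (fun ω => M t ω = m ∧ (ZTM ω, ZTY ω, ZMY ω) = (u, v, s))]
      refine Finset.sum_congr rfl fun t' _ => Pr_congr p fun ω => ?_
      simp only [Prod.mk.injEq]
      tauto
    have e2 : Pr p (fun ω => (ZTM ω, ZTY ω, ZMY ω) = (u, v, s)) =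
        ∑ t' : Fin 2, Pr p
          (fun ω => (T ω = t' ∧ ZTY ω = v) ∧ ZTM ω = u ∧ ZMY ω = s) := by
      rw [← Pr_partition p T (fun ω => (ZTM ω, ZTY ω, ZMY ω) = (u, v, s))]
      refine Finset.sum_congr rfl fun t' _ => Pr_congr p fun ω => ?_
      simp only [Prod.mk.injEq]
      tauto
    rw [e1, e2, Finset.mul_sum]
    exact Finset.sum_congr rfl fun t' _ => key t' v
  -- RHS numerator
  have hR : Pr p (fun ω => M (T ω) ω = m ∧ T ω = t ∧ ZTM ω = u ∧ ZMY ω = s) =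
      c * Pr p (fun ω => T ω = t ∧ ZTM ω = u ∧ ZMY ω = s) := by
    have e1 : Pr p (fun ω => M (T ω) ω = m ∧ T ω = t ∧ ZTM ω = u ∧ ZMY ω = s) =
        ∑ v' : V, Pr p
          (fun ω => (M t ω = m ∧ T ω = t ∧ ZTY ω = v') ∧ ZTM ω = u ∧ ZMY ω = s) := by
      rw [← Pr_partition p ZTY
        (fun ω => M (T ω) ω = m ∧ T ω = t ∧ ZTM ω = u ∧ ZMY ω = s)]
      refine Finset.sum_congr rfl fun v' _ => Pr_congr p fun ω => ?_
      constructor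
      · rintro ⟨⟨h1, h2, h3, h4⟩, h5⟩
        subst h2
        exact ⟨⟨h1, rfl, h5⟩, h3, h4⟩
      · rintro ⟨⟨h1, h2, h5⟩, h3, h4⟩
        subst h2
        exact ⟨⟨h1, rfl, h3, h4⟩, h5⟩
    have e2 : Pr p (fun ω => T ω = t ∧ ZTM ω = u ∧ ZMY ω = s) =
        ∑ v' : V, Pr p
          (fun ω => (T ω = t ∧ ZTY ω = v') ∧ ZTM ω = u ∧ ZMY ω = s) := by
      rw [← Pr_partition p ZTY (fun ω => T ω = t ∧ ZTM ω = u ∧ ZMY ω = s)]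
      refine Finset.sum_congr rfl fun v' _ => Pr_congr p fun ω => ?_
      tauto
    rw [e1, e2, Finset.mul_sum]
    exact Finset.sum_congr rfl fun v' _ => key t v'
  show PrCond p (fun ω => M t ω = m) (fun ω => (ZTM ω, ZTY ω, ZMY ω) = (u, v, s)) =
    PrCond p (fun ω => M (T ω) ω = m) (fun ω => T ω = t ∧ ZTM ω = u ∧ ZMY ω = s)
  rw [PrCond, PrCond, hL, hR, mul_div_assoc, mul_div_assoc,
    div_self hz.ne', div_self hTB.ne']
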